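/- If a permutation of length n is fixed under quarter-turn (90°) rotation of its permutation matrix, then n ≡ 0 (mod 4) or n ≡ 1 (mod 4). -/

import Mathlib

/-- The entry of the word `l` at (1-indexed) position `i`, i.e. `w(i)`. -/
def entry (l : List ℕ) (i : ℕ) : ℕ := l.getD (i - 1) 0

/-- `l` is the one-line notation of a permutation of `{1,…,n}`. -/
def IsPermWord (n : ℕ) (l : List ℕ) : Prop := l.Perm (List.range' 1 n)

/-- `l` is a Baxter permutation of length `n`: a permutation of `{1,…,n}`
avoiding the vincular patterns 3-14-2 and 2-41-3. -/
def IsBaxter (n : ℕ) (l : List ℕ) : Prop :=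
  IsPermWord n l ∧
  (¬ ∃ i j k, 1 ≤ i ∧ i < j ∧ j + 1 < k ∧ k ≤ n ∧
      entry l j < entry l k ∧ entry l k < entry l i ∧ entry l i < entry l (j + 1)) ∧
  (¬ ∃ i j k, 1 ≤ i ∧ i < j ∧ j + 1 < k ∧ k ≤ n ∧
      entry l (j + 1) < entry l i ∧ entry l i < entry l k ∧ entry l k < entry l j)

/-- `l` is fixed under quarter-turn (90°) rotation of its permutation matrix:
`w(w(i)) = n+1-i` for all `i ∈ {1,…,n}`. -/
def QuarterFixed (n : ℕ) (l : List ℕ) : Prop :=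
  ∀ i, 1 ≤ i → i ≤ n → entry l (entry l i) = n + 1 - i

/-- `l` is fixed under half-turn (180°) rotation of its permutation matrix:
`w(n+1-i) = n+1-w(i)` for all `i ∈ {1,…,n}`. -/
def HalfFixed (n : ℕ) (l : List ℕ) : Prop :=
  ∀ i, 1 ≤ i → i ≤ n → entry l (n + 1 - i) = n + 1 - entry l i

/-- The entry at position `i` is a left-to-right maximum. -/
def LRMaxAt (l : List ℕ) (i : ℕ) : Prop := ∀ k, 1 ≤ k → k < i → entry l k < entry l i

/-- The entry at position `i` is a right-to-left maximum. -/
def RLMaxAt (n : ℕ) (l : List ℕ) (i : ℕ) : Prop := ∀ k, i < k → k ≤ n → entry l k < entry l i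

/-- The entry at position `i` is a left-to-right minimum. -/
def LRMinAt (l : List ℕ) (i : ℕ) : Prop := ∀ k, 1 ≤ k → k < i → entry l i < entry l k

/-- The entry at position `i` is a right-to-left minimum. -/
def RLMinAt (n : ℕ) (l : List ℕ) (i : ℕ) : Prop := ∀ k, i < k → k ≤ n → entry l i < entry l k

/-- The (1-indexed) position of the value `v` in `l`, i.e. `w⁻¹(v)`. -/
def pos (l : List ℕ) (v : ℕ) : ℕ := l.idxOf v + 1

/-- The one-line notation of the inverse of the permutation `l` of `{1,…,n}`. -/
def invWord (n : ℕ) (l : List ℕ) : List ℕ := (List.range' 1 n).map (pos l)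

/-- The number of descents of a permutation word of length `n`:
indices `i ∈ {1,…,n-1}` with `w(i) > w(i+1)`. -/
noncomputable def des (n : ℕ) (l : List ℕ) : ℕ :=
  {i : ℕ | 1 ≤ i ∧ i + 1 ≤ n ∧ entry l (i + 1) < entry l i}.ncard

/-- Insert a new largest label `n+1` at (1-indexed) position `p`
in the permutation `l` of `{1,…,n}`. -/
def insertMax (n p : ℕ) (l : List ℕ) : List ℕ := l.insertIdx (p - 1) (n + 1)

/-- Insert a new smallest label `1` at (1-indexed) position `p`
(all old labels get increased by 1). -/
def insertMin (p : ℕ) (l : List ℕ) : List ℕ := (l.map (· + 1)).insertIdx (p - 1) 1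

/-- Append the value `j` at the end of the permutation `l`
(old labels `≥ j` get increased by 1). -/
def appendEnd (j : ℕ) (l : List ℕ) : List ℕ :=
  (l.map (fun x => if x < j then x else x + 1)) ++ [j]

/-- Standardize a word with distinct entries: replace the entries by `1,…,m` preserving
relative order (each entry is replaced by the number of entries less than or equal to it). -/
def standardize (l : List ℕ) : List ℕ := l.map (fun x => (l.filter (fun y => y ≤ x)).length)


/-- If `f` maps `T` into itself with all orbits of size exactly 4, then `4 ∣ T.card`. -/
lemma four_dvd_card_aux (f : ℕ → ℕ) (T : Finset ℕ)
    (hmaps : ∀ i ∈ T, f i ∈ T)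
    (h4 : ∀ i ∈ T, f (f (f (f i))) = i)
    (hd : ∀ i ∈ T, f i ≠ i ∧ f (f i) ≠ i ∧ f (f (f i)) ≠ i) :
    4 ∣ T.card := by
  induction T using Finset.strongInduction with
  | _ T ih =>
  rcases T.eq_empty_or_nonempty with rfl | ⟨a, ha⟩
  · simp
  · have ha1 : f a ∈ T := hmaps a ha
    have ha2 : f (f a) ∈ T := hmaps _ ha1
    have ha3 : f (f (f a)) ∈ T := hmaps _ ha2
    have d1 := hd a ha
    have d2 := hd _ ha1
    have d3 := hd _ ha2
    have e4a := h4 a ha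
    set O : Finset ℕ := {a, f a, f (f a), f (f (f a))} with hO
    have hOsub : O ⊆ T := by
      intro x hx
      simp only [hO, Finset.mem_insert, Finset.mem_singleton] at hx
      rcases hx with rfl | rfl | rfl | rfl <;> assumption
    have hne12 : f a ≠ f (f a) := fun h => d2.1 h.symm
    have hne13 : f a ≠ f (f (f a)) := fun h => d2.2.1 h.symm
    have hne23 : f (f a) ≠ f (f (f a)) := fun h => d3.1 h.symm
    have hne01 : a ≠ f a := fun h => d1.1 h.symm
    have hne02 : a ≠ f (f a) := fun h => d1.2.1 h.symm
    have hne03 : a ≠ f (f (f a)) := fun h => d1.2.2 h.symm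
    have hcardO : O.card = 4 := by
      rw [hO]
      rw [Finset.card_insert_of_notMem (by simp [hne01, hne02, hne03]),
        Finset.card_insert_of_notMem (by simp [hne12, hne13]),
        Finset.card_insert_of_notMem (by simp [hne23]), Finset.card_singleton]
    have haO : a ∈ O := by simp [hO]
    have hss : T \ O ⊂ T := Finset.sdiff_ssubset hOsub ⟨a, haO⟩
    have hmem' : ∀ i ∈ T \ O, i ∈ T := fun i hi => (Finset.mem_sdiff.mp hi).1
    have hmaps' : ∀ i ∈ T \ O, f i ∈ T \ O := by
      intro i hi
      obtain ⟨hiT, hiO⟩ := Finset.mem_sdiff.mp hi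
      refine Finset.mem_sdiff.mpr ⟨hmaps i hiT, ?_⟩
      intro hfO
      have hi4 := h4 i hiT
      simp only [hO, Finset.mem_insert, Finset.mem_singleton] at hfO
      apply hiO
      rcases hfO with h | h | h | h
      · rw [h] at hi4
        simp only [hO, Finset.mem_insert, Finset.mem_singleton]
        right; right; right; exact hi4.symm
      · rw [h] at hi4
        rw [e4a] at hi4
        simp only [hO, Finset.mem_insert, Finset.mem_singleton]
        left; exact hi4.symm
      · rw [h] at hi4
        have : f (f (f (f (f a)))) = f a := congrArg f e4a
        rw [this] at hi4
        simp only [hO, Finset.mem_insert, Finset.mem_singleton]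
        right; left; exact hi4.symm
      · rw [h] at hi4
        have : f (f (f (f (f (f a))))) = f (f a) := congrArg f (congrArg f e4a)
        rw [this] at hi4
        simp only [hO, Finset.mem_insert, Finset.mem_singleton]
        right; right; left; exact hi4.symm
    have hdvd : 4 ∣ (T \ O).card :=
      ih _ hss hmaps' (fun i hi => h4 i (hmem' i hi)) (fun i hi => hd i (hmem' i hi))
    have hcardsd : (T \ O).card = T.card - O.card := Finset.card_sdiff_of_subset hOsub
    have hle : O.card ≤ T.card := Finset.card_le_card hOsub
    omega

/-- If a permutation of length `n` is fixed under quarter-turn rotation of its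
permutation matrix, then `n ≡ 0` or `1 (mod 4)`. -/
theorem quarterFixed_length_mod_four (n : ℕ) (l : List ℕ)
    (hl : IsPermWord n l) (hf : QuarterFixed n l) :
    n % 4 = 0 ∨ n % 4 = 1 := by
  have hlen : l.length = n := by
    have := hl.length_eq
    simpa using this
  -- entries lie in [1, n]
  have hmem : ∀ i, 1 ≤ i → i ≤ n → 1 ≤ entry l i ∧ entry l i ≤ n := by
    intro i h1 h2
    have hlt : i - 1 < l.length := by omega
    have hml : entry l i ∈ l := by
      unfold entry
      rw [List.getD_eq_getElem l 0 hlt]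
      exact List.getElem_mem hlt
    have := (hl.mem_iff).mp hml
    rw [List.mem_range'_1] at this
    omega
  have hq : ∀ i, 1 ≤ i → i ≤ n → entry l (entry l i) = n + 1 - i := hf
  have h4 : ∀ i, 1 ≤ i → i ≤ n → entry l (entry l (entry l (entry l i))) = i := by
    intro i h1 h2
    have hm := hmem i h1 h2
    have hm2 : 1 ≤ entry l (entry l i) ∧ entry l (entry l i) ≤ n := by
      rw [hq i h1 h2]; omega
    rw [show entry l (entry l (entry l (entry l i)))
        = n + 1 - entry l (entry l i) from hq _ hm2.1 hm2.2, hq i h1 h2]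
    omega
  have hinj : ∀ i j, 1 ≤ i → i ≤ n → 1 ≤ j → j ≤ n →
      entry l i = entry l j → i = j := by
    intro i j hi1 hi2 hj1 hj2 h
    have h' : n + 1 - i = n + 1 - j := by
      rw [← hq i hi1 hi2, ← hq j hj1 hj2, h]
    omega
  have hfix : ∀ i, 1 ≤ i → i ≤ n → entry l i = i → 2 * i = n + 1 := by
    intro i h1 h2 h
    have h' := hq i h1 h2
    rw [h, h] at h'
    omega
  -- distinctness of i, e i, e² i, e³ i for non-central i
  have hd : ∀ i, 1 ≤ i → i ≤ n → 2 * i ≠ n + 1 →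
      entry l i ≠ i ∧ entry l (entry l i) ≠ i ∧
        entry l (entry l (entry l i)) ≠ i := by
    intro i h1 h2 hc
    refine ⟨?_, ?_, ?_⟩
    · intro h
      have := hfix i h1 h2 h
      omega
    · rw [hq i h1 h2]; omega
    · intro h
      have := congrArg (entry l) h
      rw [h4 i h1 h2] at this
      have := hfix i h1 h2 this.symm
      omega
  rcases Nat.even_or_odd n with he | ho
  · -- n even: all orbits have size 4 on Icc 1 n
    obtain ⟨m, hm⟩ := he
    have hdvd : 4 ∣ (Finset.Icc 1 n).card := by
      apply four_dvd_card_aux (entry l)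
      · intro i hi
        rw [Finset.mem_Icc] at *
        exact hmem i hi.1 hi.2
      · intro i hi
        rw [Finset.mem_Icc] at hi
        exact h4 i hi.1 hi.2
      · intro i hi
        rw [Finset.mem_Icc] at hi
        exact hd i hi.1 hi.2 (by omega)
    rw [Nat.card_Icc] at hdvd
    omega
  · -- n odd: remove the center point
    obtain ⟨m, hm⟩ := ho
    set c := m + 1 with hc
    have hcm : c ∈ Finset.Icc 1 n := by rw [Finset.mem_Icc]; omega
    have hmemT : ∀ i ∈ (Finset.Icc 1 n).erase c, 1 ≤ i ∧ i ≤ n ∧ 2 * i ≠ n + 1 := by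
      intro i hi
      rw [Finset.mem_erase, Finset.mem_Icc] at hi
      omega
    have hdvd : 4 ∣ ((Finset.Icc 1 n).erase c).card := by
      apply four_dvd_card_aux (entry l)
      · intro i hi
        obtain ⟨h1, h2, h3⟩ := hmemT i hi
        rw [Finset.mem_erase, Finset.mem_Icc]
        have hm1 := hmem i h1 h2
        refine ⟨?_, hm1.1, hm1.2⟩
        intro hec
        -- e i = c leads to contradiction
        have h2c : 2 * c = n + 1 := by omega
        have hc1 : 1 ≤ c := by omega
        have hc2 : c ≤ n := by omega
        have hqi := hq i h1 h2    -- e (e i) = n+1-i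
        rw [hec] at hqi           -- e c = n+1-i
        have hqc := hq c hc1 hc2  -- e (e c) = n+1-c
        rw [hqi] at hqc           -- e (n+1-i) = n+1-c = c
        have : entry l (n + 1 - i) = entry l i := by
          rw [hqc, hec]; omega
        have := hinj _ _ (by omega) (by omega) h1 h2 this
        omega
      · intro i hi
        obtain ⟨h1, h2, _⟩ := hmemT i hi
        exact h4 i h1 h2
      · intro i hi
        obtain ⟨h1, h2, h3⟩ := hmemT i hi
        exact hd i h1 h2 h3
    rw [Finset.card_erase_of_mem hcm, Nat.card_Icc] at hdvd
    omega
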